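/- For all integers 0 ≤ i ≤ d, 0 ≤ j ≤ e, and k ≥ 0, the q-Pfaff–Saalschütz-type identity qbinom(i+k, d)_q · qbinom(j+k, e)_q = Σ_{ℓ=0}^{d+e} q^{(ℓ-e-i)(ℓ-d-j)} qbinom(d+j-i, ℓ-i)_q · qbinom(e+i-j, ℓ-j)_q · qbinom(ℓ+k, d+e)_q holds, where qbinom(m,n)_q = 0 when n < 0 or n > m. -/

import Mathlib

open Polynomial Finset

noncomputable section

/-- The field ℚ(q) of rational functions. -/
abbrev K : Type := RatFunc ℚ

/-- The variable q of ℚ(q). -/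
def qq : K := RatFunc.X

/-- The q-integer [n]_t = (t^n - 1)/(t - 1), for n ∈ ℤ. -/
def qint (t : K) (n : ℤ) : K := (t ^ n - 1) / (t - 1)

/-- The q-factorial [n]!_t. -/
def qfact (t : K) (n : ℕ) : K := ∏ i ∈ range n, qint t (i + 1)

/-- The generalized q-binomial qbinom(m, n)_t = [m]_t [m-1]_t ⋯ [m-n+1]_t / [n]!_t. -/
def qbinom (t : K) (m : ℤ) (n : ℕ) : K := (∏ i ∈ range n, qint t (m - i)) / qfact t n

/-- The q-binomial with the vanishing convention: 0 unless 0 ≤ n ≤ m. -/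
def qbinomv (t : K) (m n : ℤ) : K :=
  if 0 ≤ n ∧ n ≤ m then (∏ i ∈ range n.toNat, qint t (m - i)) / qfact t n.toNat else 0

/-- The polynomial [n, x]_t = [n]_t + t^n x. -/
def qb (t : K) (n : ℤ) : Polynomial K := C (qint t n) + C (t ^ n) * X

/-- The polynomial qbase(m, x, n)_t = [m-n+1,x]_t ⋯ [m,x]_t / [n]!_t. -/
def qbase (t : K) (m : ℤ) (n : ℕ) : Polynomial K :=
  (∏ i ∈ range n, qb t (m - n + 1 + i)) * C (qfact t n)⁻¹

lemma qq_ne_zero : qq ≠ 0 := RatFunc.X_ne_zero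
lemma qq_pow_ne_one (n : ℕ) (h : n ≠ 0) : qq ^ n ≠ 1 := by
  unfold qq
  intro hc
  rw [← RatFunc.algebraMap_X (K := ℚ), ← map_pow, ← map_one (algebraMap ℚ[X] (RatFunc ℚ))] at hc
  have := RatFunc.algebraMap_injective ℚ hc
  have h2 := congrArg Polynomial.natDegree this
  simp [Polynomial.natDegree_X_pow] at h2
  exact h h2

lemma qq_zpow_ne_one (n : ℤ) (h : n ≠ 0) : qq ^ n ≠ 1 := by
  rcases n.lt_or_lt_of_ne h with hn | hn
  · intro hc
    have : qq ^ (-n) = 1 := by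
      have := congrArg (·⁻¹) hc
      simpa [← zpow_neg] using this
    rw [show (-n) = ((-n).toNat : ℤ) by omega, zpow_natCast] at this
    exact qq_pow_ne_one _ (by omega) this
  · intro hc
    rw [show n = (n.toNat : ℤ) by omega, zpow_natCast] at hc
    exact qq_pow_ne_one _ (by omega) hc

lemma qq_sub_one_ne : qq - 1 ≠ 0 := by
  have := qq_pow_ne_one 1 one_ne_zero
  simpa [sub_ne_zero] using this

lemma qint_ne_zero (n : ℤ) (h : n ≠ 0) : qint qq n ≠ 0 :=
  div_ne_zero (sub_ne_zero.mpr (qq_zpow_ne_one n h)) qq_sub_one_ne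

lemma qint_zero : qint qq 0 = 0 := by simp [qint]

lemma qfact_ne_zero (n : ℕ) : qfact qq n ≠ 0 := by
  unfold qfact
  exact Finset.prod_ne_zero_iff.mpr (fun i _ => qint_ne_zero _ (by positivity))

lemma qint_add (a b : ℤ) : qint qq (a + b) = qint qq a + qq ^ a * qint qq b := by
  unfold qint
  rw [zpow_add₀ qq_ne_zero, ← mul_div_assoc, ← add_div]
  congr 1
  ring

lemma qint_mul (n : ℤ) : qint qq n * (qq - 1) = qq ^ n - 1 :=
  div_mul_cancel₀ _ qq_sub_one_ne

lemma qbinom_succ (m : ℤ) (n : ℕ) :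
    qbinom qq m (n + 1) = (qbinom qq (m-1) n * qint qq m) / qint qq (n+1) := by
  unfold qbinom qfact
  rw [Finset.prod_range_succ', Finset.prod_range_succ]
  push_cast
  have : ∀ x ∈ range n, qint qq (m - (↑x + 1)) = qint qq (m - 1 - ↑x) := by
    intro x _; ring_nf
  rw [Finset.prod_congr rfl this]
  field_simp
  rw [sub_zero]

lemma qbinom_succ' (m : ℤ) (n : ℕ) :
    qbinom qq m (n + 1) = (qbinom qq m n * qint qq (m - n)) / qint qq ((n:ℤ)+1) := by
  unfold qbinom qfact
  rw [Finset.prod_range_succ, Finset.prod_range_succ]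
  push_cast
  field_simp

lemma qbinom_zero (m : ℤ) : qbinom qq m 0 = 1 := by
  simp [qbinom, qfact]

lemma qbinom_pascal1 (m : ℤ) (n : ℕ) :
    qbinom qq m (n+1) = qbinom qq (m-1) (n+1) + qq ^ (m-((n:ℤ)+1)) * qbinom qq (m-1) n := by
  rw [qbinom_succ m n, qbinom_succ' (m-1) n]
  have key := qint_add (m - ((n:ℤ)+1)) ((n:ℤ)+1)
  rw [show m - ((n:ℤ)+1) + ((n:ℤ)+1) = m by ring] at key
  rw [show m - 1 - (n:ℤ) = m - ((n:ℤ)+1) by ring, key]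
  have h1 : qint qq ((n:ℤ)+1) ≠ 0 := qint_ne_zero _ (by positivity)
  field_simp

lemma qbinom_pascal2 (m : ℤ) (n : ℕ) :
    qbinom qq m (n+1) = qq ^ ((n:ℤ)+1) * qbinom qq (m-1) (n+1) + qbinom qq (m-1) n := by
  rw [qbinom_succ m n, qbinom_succ' (m-1) n]
  have key := qint_add ((n:ℤ)+1) (m - ((n:ℤ)+1))
  rw [show ((n:ℤ)+1) + (m - ((n:ℤ)+1)) = m by ring] at key
  rw [show m - 1 - (n:ℤ) = m - ((n:ℤ)+1) by ring, key]
  have h1 : qint qq ((n:ℤ)+1) ≠ 0 := qint_ne_zero _ (by positivity)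
  field_simp
  ring

lemma qbinom_eq_zero (m : ℤ) (n : ℕ) (h1 : 0 ≤ m) (h2 : m < n) : qbinom qq m n = 0 := by
  unfold qbinom
  rw [Finset.prod_eq_zero (i := m.toNat) (by simp; omega)]
  · simp
  · rw [show m - (m.toNat : ℤ) = 0 by omega, qint_zero]

-- qbinomv layer
lemma qbinomv_eq (m n : ℤ) (hm : 0 ≤ m) (hn : 0 ≤ n) :
    qbinomv qq m n = qbinom qq m n.toNat := by
  unfold qbinomv
  by_cases h : 0 ≤ n ∧ n ≤ m
  · rw [if_pos h]; rfl
  · rw [if_neg h, qbinom_eq_zero m n.toNat hm (by omega)]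

lemma qbinomv_neg (m n : ℤ) (h : ¬ (0 ≤ n ∧ n ≤ m)) : qbinomv qq m n = 0 := if_neg h

lemma qbinomv_zero (m : ℤ) (hm : 0 ≤ m) : qbinomv qq m 0 = 1 := by
  rw [qbinomv_eq m 0 hm le_rfl]; exact qbinom_zero m

lemma qbinomv_self (m : ℤ) (hm : 0 ≤ m) : qbinomv qq m m = 1 := by
  rw [qbinomv_eq m m hm hm]
  unfold qbinom
  rw [div_eq_one_iff_eq (qfact_ne_zero _), qfact, ← Finset.prod_range_reflect]
  apply Finset.prod_congr rfl
  intro x hx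
  simp only [Finset.mem_range] at hx
  congr 1
  omega

lemma qbinomv_pascal1 (m n : ℤ) (hn : 1 ≤ n) :
    qbinomv qq m n = qbinomv qq (m-1) n + qq ^ (m-n) * qbinomv qq (m-1) (n-1) := by
  by_cases hm : 1 ≤ m
  · rw [qbinomv_eq m n (by omega) (by omega), qbinomv_eq (m-1) n (by omega) (by omega),
      qbinomv_eq (m-1) (n-1) (by omega) (by omega)]
    have h1 : n.toNat = (n-1).toNat + 1 := by omega
    rw [h1]
    have h2 : ((((n-1).toNat : ℤ)) + 1) = n := by omega
    rw [qbinom_pascal1 m (n-1).toNat, h2]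
  · rw [qbinomv_neg m n (by omega), qbinomv_neg (m-1) n (by omega),
      qbinomv_neg (m-1) (n-1) (by omega)]
    ring

lemma qbinomv_pascal2 (m n : ℤ) (hn : 1 ≤ n) :
    qbinomv qq m n = qq ^ n * qbinomv qq (m-1) n + qbinomv qq (m-1) (n-1) := by
  by_cases hm : 1 ≤ m
  · rw [qbinomv_eq m n (by omega) (by omega), qbinomv_eq (m-1) n (by omega) (by omega),
      qbinomv_eq (m-1) (n-1) (by omega) (by omega)]
    have h1 : n.toNat = (n-1).toNat + 1 := by omega
    rw [h1]
    have h2 : ((((n-1).toNat : ℤ)) + 1) = n := by omega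
    rw [qbinom_pascal2 m (n-1).toNat, h2]
  · rw [qbinomv_neg m n (by omega), qbinomv_neg (m-1) n (by omega),
      qbinomv_neg (m-1) (n-1) (by omega)]
    ring

lemma qbinom_absorb (m : ℤ) (nn : ℕ) :
    qbinom qq m (nn+1) * (qq^((nn:ℤ)+1) - 1) = (qq^(m-nn) - 1) * qbinom qq m nn := by
  rw [qbinom_succ', ← qint_mul ((nn:ℤ)+1), ← qint_mul (m-nn)]
  have h1 : qint qq ((nn:ℤ)+1) ≠ 0 := qint_ne_zero _ (by positivity)
  field_simp

lemma qbinomv_absorb (m n : ℤ) :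
    qbinomv qq m n * (qq^n - 1) = (qq^(m-n+1) - 1) * qbinomv qq m (n-1) := by
  by_cases h1 : 1 ≤ n ∧ n ≤ m
  · rw [qbinomv_eq m n (by omega) (by omega), qbinomv_eq m (n-1) (by omega) (by omega)]
    have h2 : n.toNat = (n-1).toNat + 1 := by omega
    rw [h2]
    have h3 := qbinom_absorb m (n-1).toNat
    rw [show (((n-1).toNat : ℤ)) + 1 = n by omega, show m - (((n-1).toNat : ℤ)) = m - n + 1 by omega] at h3
    exact h3
  · by_cases h2 : n = 0
    · subst h2; simp [qbinomv_neg m (-1) (by omega)]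
    · by_cases h3 : n ≤ 0
      · rw [qbinomv_neg m n (by omega), qbinomv_neg m (n-1) (by omega)]; ring
      · -- n ≥ 1, m < n
        by_cases h4 : m = n - 1
        · rw [qbinomv_neg m n (by omega), show m - n + 1 = 0 by omega]
          simp
        · rw [qbinomv_neg m n (by omega), qbinomv_neg m (n-1) (by omega)]; ring

lemma qbinomv_bracket (A a : ℤ) (hA : 0 ≤ A) :
    qbinomv qq (A+1) (a+1) - qq^(a+1) * qbinomv qq A (a+1) = qbinomv qq A a := by
  by_cases ha : 0 ≤ a
  · have hp := qbinomv_pascal1 (A+1) (a+1) (by omega)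
    rw [show (A+1) - (a+1) = A - a by ring, show A+1-1 = A by ring, show a+1-1 = a by ring] at hp
    have hb := qbinomv_absorb A (a+1)
    rw [show A - (a+1) + 1 = A - a by ring, show a+1-1 = a by ring] at hb
    linear_combination hp - hb
  · by_cases ha2 : a = -1
    · subst ha2
      norm_num
      rw [qbinomv_zero (A+1) (by omega), qbinomv_zero A hA, qbinomv_neg A (-1) (by omega)]
      ring
    · rw [qbinomv_neg (A+1) (a+1) (by omega), qbinomv_neg A (a+1) (by omega),
        qbinomv_neg A a (by omega)]
      ring

lemma qbinomv_cross (A B a b : ℤ) (hA : 0 ≤ A) (hB : 1 ≤ B) :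
    qbinomv qq A a * qbinomv qq B b = qbinomv qq A a * qbinomv qq (B-1) (b-1)
      + qq^b * qbinomv qq (B-1) b * (qbinomv qq (A+1) (a+1) - qq^(a+1) * qbinomv qq A (a+1)) := by
  rw [qbinomv_bracket A a hA]
  by_cases hb : 1 ≤ b
  · have hp := qbinomv_pascal2 B b (by omega)
    linear_combination (qbinomv qq A a) * hp
  · by_cases hb2 : b = 0
    · subst hb2
      rw [qbinomv_zero B (by omega), qbinomv_zero (B-1) (by omega), qbinomv_neg (B-1) (0-1) (by omega)]
      simp
    · rw [qbinomv_neg B b (by omega), qbinomv_neg (B-1) b (by omega),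
        qbinomv_neg (B-1) (b-1) (by omega)]
      ring

/-- coefficient in the sum -/
def T (ii dd jj ee ℓ : ℤ) : K :=
  qq ^ ((ℓ - ee - ii) * (ℓ - dd - jj)) * qbinomv qq (dd + jj - ii) (ℓ - ii) *
    qbinomv qq (ee + ii - jj) (ℓ - jj)

lemma star (ii dd jj ee ℓ : ℤ) (h0 : 0 ≤ ii) (hid : ii ≤ dd) (hj0 : 0 ≤ jj) (hje : jj ≤ ee) :
    T (ii+1) (dd+1) jj ee ℓ
      = T ii dd jj ee (ℓ-1) - qq^(dd+ee+1) * T ii dd jj ee ℓ + qq^(dd+1) * T ii (dd+1) jj ee ℓ := by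
  have hcross := qbinomv_cross (dd+jj-ii) (ee+ii+1-jj) (ℓ-ii-1) (ℓ-jj) (by omega) (by omega)
  rw [show ee+ii+1-jj-1 = ee+ii-jj by ring, show ℓ-ii-1+1 = ℓ-ii by ring,
      show dd+jj-ii+1 = dd+1+jj-ii by ring] at hcross
  simp only [T]
  rw [show (ℓ - ee - (ii+1)) * (ℓ - (dd+1) - jj) = (ℓ-ee-ii-1)*(ℓ-dd-jj-1) by ring,
      show (ℓ-1 - ee - ii) * (ℓ-1 - dd - jj) = (ℓ-ee-ii-1)*(ℓ-dd-jj-1) by ring,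
      show ℓ-(ii+1) = ℓ-ii-1 by ring, show dd+1+jj-(ii+1) = dd+jj-ii by ring,
      show ee+(ii+1)-jj = ee+ii+1-jj by ring,
      show ℓ-1-ii = ℓ-ii-1 by ring, show ℓ-1-jj = ℓ-jj-1 by ring]
  have e3 : (qq:K)^((ℓ-ee-ii)*(ℓ-dd-jj))
      = qq^((ℓ-ee-ii-1)*(ℓ-dd-jj-1)) * qq^(ℓ-ii) * qq^(ℓ-jj) * qq^(-(dd+ee+1)) := by
    rw [← zpow_add₀ qq_ne_zero, ← zpow_add₀ qq_ne_zero, ← zpow_add₀ qq_ne_zero]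
    congr 1; ring
  have e4 : (qq:K)^((ℓ-ee-ii)*(ℓ-(dd+1)-jj))
      = qq^((ℓ-ee-ii-1)*(ℓ-dd-jj-1)) * qq^(ℓ-jj) * qq^(-(dd+1)) := by
    rw [← zpow_add₀ qq_ne_zero, ← zpow_add₀ qq_ne_zero]
    congr 1; ring
  rw [e3, e4]
  have hsw : (qq:K)^(dd+ee+1) * qq^(-(dd+ee+1)) = 1 := by
    rw [← zpow_add₀ qq_ne_zero, add_neg_cancel, zpow_zero]
  have hsw2 : (qq:K)^(dd+1) * qq^(-(dd+1)) = 1 := by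
    rw [← zpow_add₀ qq_ne_zero, add_neg_cancel, zpow_zero]
  linear_combination (qq^((ℓ-ee-ii-1)*(ℓ-dd-jj-1))) * hcross
    + (qq^((ℓ-ee-ii-1)*(ℓ-dd-jj-1)) * qq^(ℓ-ii) * qq^(ℓ-jj) * qbinomv qq (ee+ii-jj) (ℓ-jj)
        * qbinomv qq (dd+jj-ii) (ℓ-ii)) * hsw
    - (qq^((ℓ-ee-ii-1)*(ℓ-dd-jj-1)) * qq^(ℓ-jj) * qbinomv qq (ee+ii-jj) (ℓ-jj)
        * qbinomv qq (dd+1+jj-ii) (ℓ-ii)) * hsw2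

def S (i d j e k : ℕ) : Prop :=
  qbinom qq ((i:ℤ) + k) d * qbinom qq ((j:ℤ) + k) e =
    ∑ ℓ ∈ range (d + e + 1), T i d j e ℓ * qbinom qq ((ℓ:ℤ) + k) (d + e)

lemma T_symm (ii dd jj ee ℓ : ℤ) : T jj ee ii dd ℓ = T ii dd jj ee ℓ := by
  simp only [T]
  rw [show (ℓ-dd-jj)*(ℓ-ee-ii) = (ℓ-ee-ii)*(ℓ-dd-jj) by ring]
  ring

lemma S_symm (i d j e k : ℕ) (h : S i d j e k) : S j e i d k := by
  unfold S at h ⊢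
  rw [mul_comm, h, Nat.add_comm e d]
  exact Finset.sum_congr rfl (fun ℓ _ => by rw [T_symm])

lemma S_base (j e k : ℕ) (hje : j ≤ e) : S 0 0 j e k := by
  unfold S
  simp only [Nat.zero_add]
  rw [qbinom_zero, one_mul]
  rw [Finset.sum_eq_single j]
  · simp only [T]
    push_cast
    rw [show ((j:ℤ) - e - 0) * ((j:ℤ) - 0 - j) = 0 by ring, zpow_zero, one_mul,
        show (0:ℤ) + j - 0 = (j:ℤ) by ring, show ((j:ℤ)) - 0 = (j:ℤ) by ring,
        qbinomv_self _ (by positivity), show ((j:ℤ)) - j = 0 by ring,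
        qbinomv_zero _ (by omega), one_mul, one_mul]
  · intro ℓ _ hne
    simp only [T]
    rcases Nat.lt_or_ge ℓ j with hc | hc
    · have hz : qbinomv qq ((e:ℤ) + ((0:ℕ):ℤ) - j) ((ℓ:ℤ) - j) = 0 :=
        qbinomv_neg _ _ (by rintro ⟨h1',h2'⟩; omega)
      rw [hz]; ring
    · have hz : qbinomv qq (((0:ℕ):ℤ) + (j:ℤ) - ((0:ℕ):ℤ)) ((ℓ:ℤ) - ((0:ℕ):ℤ)) = 0 :=
        qbinomv_neg _ _ (by rintro ⟨h1',h2'⟩; omega)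
      rw [hz]; ring
  · intro hc
    simp only [Finset.mem_range] at hc
    omega

lemma S_step (i d j e k : ℕ) (hid : i ≤ d) (hje : j ≤ e)
    (H1 : S i d j e k) (H2 : S i (d+1) j e k) : S (i+1) (d+1) j e k := by
  unfold S at H1 H2 ⊢
  push_cast at H1 H2 ⊢
  rw [show d+1+e+1 = (d+e+1)+1 from by omega, show d+1+e = (d+e)+1 from by omega] at H2 ⊢
  -- LHS Pascal
  have pas := qbinom_pascal2 ((i:ℤ)+1+(k:ℤ)) d
  rw [show ((i:ℤ)+1+(k:ℤ))-1 = (i:ℤ)+(k:ℤ) by ring] at pas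
  rw [pas, add_mul, mul_assoc, H1, H2]
  -- termwise star on RHS
  have hterm : ∀ ℓ ∈ range ((d+e+1)+1),
      T ((i:ℤ)+1) ((d:ℤ)+1) j e ℓ * qbinom qq ((ℓ:ℤ) + k) ((d+e)+1)
        = T i d j e ((ℓ:ℤ)-1) * qbinom qq ((ℓ:ℤ) + k) ((d+e)+1)
          - qq^((d:ℤ)+e+1) * (T i d j e ℓ * qbinom qq ((ℓ:ℤ) + k) ((d+e)+1))
          + qq^((d:ℤ)+1) * (T i ((d:ℤ)+1) j e ℓ * qbinom qq ((ℓ:ℤ) + k) ((d+e)+1)) := by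
    intro ℓ _
    rw [star i d j e ℓ (by positivity) (by exact_mod_cast hid) (by positivity)
      (by exact_mod_cast hje)]
    ring
  rw [Finset.sum_congr rfl hterm, Finset.sum_add_distrib, Finset.sum_sub_distrib,
    ← Finset.mul_sum, ← Finset.mul_sum]
  -- boundary: SB
  have hSB : ∑ ℓ ∈ range ((d+e+1)+1), T i d j e ℓ * qbinom qq ((ℓ:ℤ) + k) ((d+e)+1)
      = ∑ ℓ ∈ range (d+e+1), T i d j e ℓ * qbinom qq ((ℓ:ℤ) + k) ((d+e)+1) := by
    rw [Finset.sum_range_succ]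
    have : T i d j e ((d+e+1 : ℕ):ℤ) = 0 := by
      simp only [T]
      rw [qbinomv_neg ((e:ℤ) + i - j) (((d+e+1:ℕ):ℤ) - j) (by rintro ⟨h1',h2'⟩; omega)]
      ring
    rw [this]
    ring
  -- boundary: SA
  have hSA : ∑ ℓ ∈ range ((d+e+1)+1), T i d j e ((ℓ:ℤ)-1) * qbinom qq ((ℓ:ℤ) + k) ((d+e)+1)
      = ∑ ℓ ∈ range (d+e+1), T i d j e ℓ * qbinom qq ((ℓ:ℤ)+1 + k) ((d+e)+1) := by
    rw [Finset.sum_range_succ']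
    have h0 : T i d j e (((0:ℕ):ℤ)-1) = 0 := by
      simp only [T]
      rw [qbinomv_neg ((d:ℤ) + j - i) ((((0:ℕ):ℤ)-1) - i) (by rintro ⟨h1',h2'⟩; omega)]
      ring
    rw [h0, zero_mul, add_zero]
    exact Finset.sum_congr rfl (fun ℓ _ => by push_cast; ring_nf)
  rw [hSB, hSA]
  -- expand H1's sum via inverse Pascal
  have hP : ∀ ℓ ∈ range (d+e+1), T i d j e ℓ * qbinom qq ((ℓ:ℤ) + k) (d+e)
      = T i d j e ℓ * qbinom qq ((ℓ:ℤ)+1 + k) ((d+e)+1)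
        - qq^((d:ℤ)+e+1) * (T i d j e ℓ * qbinom qq ((ℓ:ℤ) + k) ((d+e)+1)) := by
    intro ℓ _
    have p2 := qbinom_pascal2 ((ℓ:ℤ)+1+(k:ℤ)) (d+e)
    rw [show ((ℓ:ℤ)+1+(k:ℤ))-1 = (ℓ:ℤ)+(k:ℤ) by ring] at p2
    rw [show ((d+e:ℕ):ℤ)+1 = (d:ℤ)+e+1 by push_cast; ring] at p2
    linear_combination (-(T i d j e ℓ)) * p2
  rw [Finset.sum_congr rfl hP, Finset.sum_sub_distrib, ← Finset.mul_sum]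
  ring

lemma S_shift (d e k : ℕ) (hd : 1 ≤ d) (he : 1 ≤ e) (h : S 1 d 1 e k) : S 0 d 0 e (k+1) := by
  unfold S at h ⊢
  push_cast at h ⊢
  rw [show ((0:ℤ))+((k:ℤ)+1) = 1+(k:ℤ) by ring]
  rw [Finset.sum_range_succ'] at h
  have hf0 : T 1 (d:ℤ) 1 e (((0:ℕ)):ℤ) = 0 := by
    simp only [T]
    rw [qbinomv_neg ((d:ℤ)+1-1) ((((0:ℕ)):ℤ)-1) (by rintro ⟨h1',h2'⟩; omega)]
    ring
  rw [hf0, zero_mul, add_zero] at h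
  have hcong : ∀ ℓ ∈ range (d+e),
      T 1 (d:ℤ) 1 e (((ℓ+1:ℕ)):ℤ) * qbinom qq ((((ℓ+1:ℕ)):ℤ)+k) (d+e)
        = T 0 (d:ℤ) 0 e (ℓ:ℤ) * qbinom qq ((ℓ:ℤ)+((k:ℤ)+1)) (d+e) := by
    intro ℓ _
    simp only [T]
    push_cast
    rw [show ((ℓ:ℤ)+1-(e:ℤ)-1)*((ℓ:ℤ)+1-(d:ℤ)-1) = ((ℓ:ℤ)-(e:ℤ)-0)*((ℓ:ℤ)-(d:ℤ)-0) by ring,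
        show (d:ℤ)+1-1 = (d:ℤ)+0-0 by ring, show (e:ℤ)+1-1 = (e:ℤ)+0-0 by ring,
        show (ℓ:ℤ)+1-1 = (ℓ:ℤ)-0 by ring, show (ℓ:ℤ)+1+(k:ℤ) = (ℓ:ℤ)+((k:ℤ)+1) by ring]
  rw [Finset.sum_congr rfl hcong] at h
  have hlast : T 0 (d:ℤ) 0 e (((d+e:ℕ)):ℤ) = 0 := by
    simp only [T]
    rw [qbinomv_neg ((d:ℤ)+0-0) ((((d+e:ℕ)):ℤ)-0) (by rintro ⟨h1',h2'⟩; omega)]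
    ring
  rw [Finset.sum_range_succ, hlast, zero_mul, add_zero]
  exact h

lemma S_zero (d e : ℕ) (hd : 1 ≤ d) (he : 1 ≤ e) : S 0 d 0 e 0 := by
  unfold S
  have hL : qbinom qq (((0:ℕ):ℤ) + ((0:ℕ):ℤ)) d = 0 := by
    rw [show ((0:ℕ):ℤ) + ((0:ℕ):ℤ) = (0:ℤ) by norm_num]
    exact qbinom_eq_zero 0 d le_rfl (by exact_mod_cast hd)
  rw [hL, zero_mul]
  symm
  apply Finset.sum_eq_zero
  intro ℓ hl
  simp only [Finset.mem_range] at hl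
  rcases Nat.lt_or_ge ℓ (d+e) with hc | hc
  · have hz : qbinom qq ((ℓ:ℤ) + ((0:ℕ):ℤ)) (d+e) = 0 := by
      rw [show (ℓ:ℤ)+((0:ℕ):ℤ) = (ℓ:ℤ) by push_cast; ring]
      exact qbinom_eq_zero ℓ (d+e) (by positivity) (by exact_mod_cast hc)
    rw [hz]; ring
  · have hle : ℓ = d+e := by omega
    subst hle
    simp only [T]
    have hz : qbinomv qq ((d:ℤ)+((0:ℕ):ℤ)-((0:ℕ):ℤ)) (((d+e:ℕ):ℤ)-((0:ℕ):ℤ)) = 0 :=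
      qbinomv_neg _ _ (by rintro ⟨h1',h2'⟩; omega)
    rw [hz]; ring

lemma S_main : ∀ n i d j e k, 3*k + 2*(d+e) + i + j ≤ n → i ≤ d → j ≤ e → S i d j e k := by
  intro n
  induction n with
  | zero =>
    intro i d j e k hn hid hje
    obtain rfl : i = 0 := by omega
    obtain rfl : d = 0 := by omega
    obtain rfl : j = 0 := by omega
    obtain rfl : e = 0 := by omega
    obtain rfl : k = 0 := by omega
    exact S_base 0 0 0 le_rfl
  | succ n IH =>
    intro i d j e k hn hid hje
    rcases Nat.eq_zero_or_pos d with rfl | hd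
    · obtain rfl : i = 0 := by omega
      exact S_base j e k hje
    obtain ⟨d', rfl⟩ : ∃ d', d = d'+1 := ⟨d-1, by omega⟩
    rcases Nat.eq_zero_or_pos i with rfl | hi
    · rcases Nat.eq_zero_or_pos e with rfl | he
      · obtain rfl : j = 0 := by omega
        exact S_symm 0 0 0 (d'+1) k (S_base 0 (d'+1) k (by omega))
      obtain ⟨e', rfl⟩ : ∃ e', e = e'+1 := ⟨e-1, by omega⟩
      rcases Nat.eq_zero_or_pos j with rfl | hj
      · rcases Nat.eq_zero_or_pos k with rfl | hk
        · exact S_zero _ _ (by omega) (by omega)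
        · obtain ⟨k', rfl⟩ : ∃ k', k = k'+1 := ⟨k-1, by omega⟩
          exact S_shift _ _ k' (by omega) (by omega)
            (IH 1 (d'+1) 1 (e'+1) k' (by omega) (by omega) (by omega))
      · obtain ⟨j', rfl⟩ : ∃ j', j = j'+1 := ⟨j-1, by omega⟩
        apply S_symm
        exact S_step j' e' 0 (d'+1) k (by omega) (by omega)
          (S_symm _ _ _ _ _ (IH 0 (d'+1) j' e' k (by omega) (by omega) (by omega)))
          (S_symm _ _ _ _ _ (IH 0 (d'+1) j' (e'+1) k (by omega) (by omega) (by omega)))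
    · obtain ⟨i', rfl⟩ : ∃ i', i = i'+1 := ⟨i-1, by omega⟩
      exact S_step i' d' j e k (by omega) hje
        (IH i' d' j e k (by omega) (by omega) hje)
        (IH i' (d'+1) j e k (by omega) (by omega) hje)

theorem q_pfaff_saalschutz (i d j e k : ℕ) (hid : i ≤ d) (hje : j ≤ e) :
    qbinom qq (i + k) d * qbinom qq (j + k) e = ∑ ℓ ∈ range (d + e + 1),
      qq ^ ((((ℓ : ℤ) - e - i) * ((ℓ : ℤ) - d - j))) *
        qbinomv qq ((d : ℤ) + j - i) ((ℓ : ℤ) - i) *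
        qbinomv qq ((e : ℤ) + i - j) ((ℓ : ℤ) - j) *
        qbinom qq (ℓ + k) (d + e) := by
  have h := S_main (3*k + 2*(d+e) + i + j) i d j e k le_rfl hid hje
  unfold S T at h
  push_cast at h ⊢
  exact h

end
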